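/- Let Z1, Z2 be independent standard normal random variables and let D ⊂ ℝ² be a closed convex set not containing the origin, with Δ the Euclidean distance from the origin to D. Then Pr[(Z1,Z2) ∈ D] ≤ e^{-Δ²/2}. -/

import Mathlib

open MeasureTheory ProbabilityTheory Real
open scoped ENNReal NNReal InnerProductSpace

open scoped ENNReal NNReal

lemma pdf_mul (t x : ℝ) : Real.exp (t * x) * gaussianPDFReal 0 1 x
    = Real.exp (t ^ 2 / 2) * gaussianPDFReal t 1 x := by
  simp only [gaussianPDFReal, NNReal.coe_one, mul_one, sub_zero]
  have h : Real.exp (t * x) * Real.exp (-x ^ 2 / 2) =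
      Real.exp (t ^ 2 / 2) * Real.exp (-(x - t) ^ 2 / 2) := by
    rw [← Real.exp_add, ← Real.exp_add]
    congr 1
    ring
  rw [mul_left_comm, mul_left_comm (Real.exp (t ^ 2 / 2)), h]

lemma integrable_exp_mul_gauss (t : ℝ) :
    Integrable (fun x => Real.exp (t * x)) (gaussianReal 0 1) := by
  rw [gaussianReal_of_var_ne_zero _ one_ne_zero]
  have hmeas : Measurable fun x => (gaussianPDFReal 0 1 x).toNNReal :=
    (measurable_gaussianPDFReal 0 1).real_toNNReal
  have : (gaussianPDF 0 1) = fun x => ((gaussianPDFReal 0 1 x).toNNReal : ℝ≥0∞) := rfl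
  rw [this, integrable_withDensity_iff_integrable_coe_smul hmeas]
  have : (fun x => ((gaussianPDFReal 0 1 x).toNNReal : ℝ) • Real.exp (t * x))
      = fun x => Real.exp (t ^ 2 / 2) * gaussianPDFReal t 1 x := by
    ext x
    rw [smul_eq_mul, Real.coe_toNNReal _ (gaussianPDFReal_nonneg 0 1 x), mul_comm, pdf_mul]
  rw [this]
  exact (integrable_gaussianPDFReal t 1).const_mul _

lemma integral_exp_mul_gauss (t : ℝ) :
    ∫ x, Real.exp (t * x) ∂(gaussianReal 0 1) = Real.exp (t ^ 2 / 2) := by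
  rw [gaussianReal_of_var_ne_zero _ one_ne_zero]
  have hmeas : Measurable fun x => (gaussianPDFReal 0 1 x).toNNReal :=
    (measurable_gaussianPDFReal 0 1).real_toNNReal
  have h : (gaussianPDF 0 1) = fun x => ((gaussianPDFReal 0 1 x).toNNReal : ℝ≥0∞) := rfl
  rw [h, integral_withDensity_eq_integral_smul hmeas]
  have : (fun x => (gaussianPDFReal 0 1 x).toNNReal • Real.exp (t * x))
      = fun x => Real.exp (t ^ 2 / 2) * gaussianPDFReal t 1 x := by
    ext x
    rw [NNReal.smul_def, smul_eq_mul, Real.coe_toNNReal _ (gaussianPDFReal_nonneg 0 1 x),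
      mul_comm, pdf_mul]
  rw [this, integral_const_mul, integral_gaussianPDFReal_eq_one t one_ne_zero, mul_one]


lemma sep (D : Set (ℝ × ℝ)) (hclosed : IsClosed D) (hconv : Convex ℝ D)
    (hne : D.Nonempty) :
    ∃ p : ℝ × ℝ,
      Real.sqrt (p.1 ^ 2 + p.2 ^ 2)
        = sInf ((fun z : ℝ × ℝ => Real.sqrt (z.1 ^ 2 + z.2 ^ 2)) '' D)
      ∧ ∀ z ∈ D, p.1 ^ 2 + p.2 ^ 2 ≤ p.1 * z.1 + p.2 * z.2 := by
  let e := WithLp.prodContinuousLinearEquiv 2 ℝ ℝ ℝ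
  let K : Set (WithLp 2 (ℝ × ℝ)) := e ⁻¹' D
  have hKclosed : IsClosed K := hclosed.preimage e.continuous
  have hKconv : Convex ℝ K := hconv.linear_preimage (e : WithLp 2 (ℝ × ℝ) →ₗ[ℝ] ℝ × ℝ)
  obtain ⟨z0, hz0⟩ := hne
  have hKne : K.Nonempty := ⟨e.symm z0, by simpa [K] using hz0⟩
  obtain ⟨v, hvK, hv⟩ :=
    exists_norm_eq_iInf_of_complete_convex hKne hKclosed.isComplete hKconv 0
  have hnorm : ∀ w : WithLp 2 (ℝ × ℝ), ‖w‖ = Real.sqrt ((e w).1 ^ 2 + (e w).2 ^ 2) := by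
    intro w
    rw [WithLp.prod_norm_eq_of_L2]
    simp [Real.norm_eq_abs, sq_abs]
    rfl
  refine ⟨e v, ?_, ?_⟩
  · have himg : (fun z : ℝ × ℝ => Real.sqrt (z.1 ^ 2 + z.2 ^ 2)) '' D
        = Set.range (fun w : K => ‖(w : WithLp 2 (ℝ × ℝ))‖) := by
      ext r
      constructor
      · rintro ⟨z, hz, rfl⟩
        refine ⟨⟨e.symm z, by simpa [K] using hz⟩, ?_⟩
        show ‖(e.symm z : WithLp 2 (ℝ × ℝ))‖ = _
        rw [hnorm]; simp
      · rintro ⟨⟨w, hw⟩, rfl⟩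
        exact ⟨e w, hw, (hnorm w).symm⟩
    rw [himg, ← hnorm v]
    have := hv
    simp only [zero_sub, norm_neg] at this
    rw [this]
    rfl
  · intro z hz
    have hw : e.symm z ∈ K := by simpa [K] using hz
    have h1 := (norm_eq_iInf_iff_real_inner_le_zero hKconv hvK).mp hv (e.symm z) hw
    rw [zero_sub, inner_neg_left, inner_sub_right, neg_sub, sub_nonpos] at h1
    have h2 : ⟪v, v⟫_ℝ = (e v).1 ^ 2 + (e v).2 ^ 2 := by
      rw [WithLp.prod_inner_apply]
      simp [RCLike.inner_apply]
      ring_nf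
      rfl
    have h3 : ⟪v, e.symm z⟫_ℝ = (e v).1 * z.1 + (e v).2 * z.2 := by
      rw [WithLp.prod_inner_apply]
      simp [RCLike.inner_apply]
      change z.1 * (e v).1 + z.2 * (e v).2 = _
      ring
    rw [h2, h3] at h1
    exact h1

/-- Lu–Li bound (two-dimensional case): for independent standard normals `(Z1, Z2)`
and a closed convex set `D ⊂ ℝ²` not containing the origin, with `Δ` the Euclidean
distance from the origin to `D`, we have `Pr[(Z1,Z2) ∈ D] ≤ e^{-Δ²/2}`. -/
theorem gaussian_convex_tail (D : Set (ℝ × ℝ)) (hclosed : IsClosed D)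
    (hconv : Convex ℝ D) (h0 : (0, 0) ∉ D) (Δ : ℝ)
    (hΔ : Δ = sInf ((fun z : ℝ × ℝ => Real.sqrt (z.1 ^ 2 + z.2 ^ 2)) '' D)) :
    ((gaussianReal 0 1).prod (gaussianReal 0 1)) D
      ≤ ENNReal.ofReal (Real.exp (-Δ ^ 2 / 2)) := by
  by_cases hne : D.Nonempty
  swap
  · rw [Set.not_nonempty_iff_eq_empty] at hne
    simp [hne]
  obtain ⟨p, hp1, hp2⟩ := sep D hclosed hconv hne
  have hΔsq : Δ ^ 2 = p.1 ^ 2 + p.2 ^ 2 := by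
    rw [hΔ, ← hp1, Real.sq_sqrt (by positivity)]
  set μ := (gaussianReal 0 1).prod (gaussianReal 0 1) with hμ
  set X : ℝ × ℝ → ℝ := fun z => p.1 * z.1 + p.2 * z.2 with hX
  have hexp : (fun z : ℝ × ℝ => Real.exp (1 * X z))
      = fun z : ℝ × ℝ => Real.exp (p.1 * z.1) * Real.exp (p.2 * z.2) := by
    ext z
    rw [one_mul, hX, Real.exp_add]
  have h_int : Integrable (fun z => Real.exp (1 * X z)) μ := by
    rw [hexp]
    exact (integrable_exp_mul_gauss p.1).mul_prod (integrable_exp_mul_gauss p.2)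
  have hmgf : mgf X μ 1 = Real.exp (Δ ^ 2 / 2) := by
    rw [mgf, hexp, hμ,
      integral_prod_mul (μ := gaussianReal 0 1) (ν := gaussianReal 0 1)
        (fun x => Real.exp (p.1 * x)) (fun y => Real.exp (p.2 * y)),
      integral_exp_mul_gauss, integral_exp_mul_gauss, ← Real.exp_add]
    congr 1
    rw [hΔsq]
    ring
  have hcher := measure_ge_le_exp_mul_mgf (X := X) (μ := μ) (t := 1) (Δ ^ 2) zero_le_one h_int
  rw [hmgf, ← Real.exp_add] at hcher
  have hrhs : -1 * Δ ^ 2 + Δ ^ 2 / 2 = -Δ ^ 2 / 2 := by ring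
  rw [hrhs] at hcher
  have hsub : D ⊆ {ω | Δ ^ 2 ≤ X ω} := by
    intro z hz
    have := hp2 z hz
    rw [Set.mem_setOf_eq, hΔsq]
    exact this
  calc μ D ≤ μ {ω | Δ ^ 2 ≤ X ω} := measure_mono hsub
    _ = ENNReal.ofReal ((μ {ω | Δ ^ 2 ≤ X ω}).toReal) :=
        (ENNReal.ofReal_toReal (measure_ne_top _ _)).symm
    _ ≤ ENNReal.ofReal (Real.exp (-Δ ^ 2 / 2)) := ENNReal.ofReal_le_ofReal hcher
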